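/- With k₁ ≥ 0, k₂ ≥ 0, any solution z of z'(t) + k₁ z(t) = k₂ z(t-r) with C¹ initial data z₀ on [-r,0] satisfies |z(t)| ≤ C₀ e^{-k₁ t} e_r^{\bar k₂ t} for t > 0, where C₀ = e^{-k₁ r}|z₀(-r)| + ∫_{-r}^0 e^{k₁ s}|z₀'(s) + k₁ z₀(s)| ds and \bar k₂ = k₂ e^{k₁ r}. -/

import Mathlib

open Real

noncomputable def delayedExp (r k : ℝ) (t : ℝ) : ℝ :=
  if t < -r then 0
  else if t < 0 then 1
  else ∑ j ∈ Finset.range (⌊t / r⌋.toNat + 2),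
    k ^ j * (t - ((j : ℝ) - 1) * r) ^ j / (Nat.factorial j)

open MeasureTheory intervalIntegral Asymptotics


lemma hasDerivAt_maxpow (n : ℕ) (x : ℝ) :
    HasDerivAt (fun y : ℝ => max y 0 ^ (n + 2)) ((n + 2) * max x 0 ^ (n + 1)) x := by
  rcases lt_trichotomy x 0 with hx | rfl | hx
  · have h0 : (fun y : ℝ => max y 0 ^ (n + 2)) =ᶠ[nhds x] fun _ => (0:ℝ) := by
      filter_upwards [Iio_mem_nhds hx] with y hy
      simp [max_eq_right (le_of_lt (Set.mem_Iio.mp hy))]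
    have h1 : HasDerivAt (fun _ : ℝ => (0:ℝ)) 0 x := hasDerivAt_const x 0
    have h2 := h1.congr_of_eventuallyEq h0
    simpa [max_eq_right (le_of_lt hx)] using h2
  · rw [hasDerivAt_iff_isLittleO]
    simp only [max_self, ne_eq, sub_zero, smul_eq_mul]
    have h1 : (fun x' : ℝ => max x' 0 ^ (n + 2)) =O[nhds 0] fun x' : ℝ => x' ^ (n + 2) := by
      apply Asymptotics.IsBigO.of_bound 1
      filter_upwards with y
      simp only [one_mul, norm_pow, Real.norm_eq_abs]
      have h : |max y 0| ≤ |y| := by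
        calc |max y 0| = max y 0 := abs_of_nonneg (le_max_right y 0)
          _ ≤ |y| := max_le (le_abs_self y) (abs_nonneg y)
      exact pow_le_pow_left₀ (abs_nonneg _) h _
    have h2 : (fun x' : ℝ => x' ^ (n + 2)) =o[nhds 0] fun x' : ℝ => x' ^ 1 :=
      Asymptotics.isLittleO_pow_pow (by omega)
    have := h1.trans_isLittleO h2
    simpa using this
  · have h0 : (fun y : ℝ => max y 0 ^ (n + 2)) =ᶠ[nhds x] fun y => y ^ (n + 2) := by
      filter_upwards [Ioi_mem_nhds hx] with y hy
      simp [max_eq_left (le_of_lt (Set.mem_Ioi.mp hy))]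
    have h1 : HasDerivAt (fun y : ℝ => y ^ (n + 2)) ((n + 2) * x ^ (n + 1)) x := by
      simpa using hasDerivAt_pow (n + 2) x
    have h2 := h1.congr_of_eventuallyEq h0
    simpa [max_eq_left (le_of_lt hx)] using h2

lemma hasDerivAt_maxpow' (n : ℕ) (c x : ℝ) :
    HasDerivAt (fun y : ℝ => max (y - c) 0 ^ (n + 2)) ((n + 2) * max (x - c) 0 ^ (n + 1)) x := by
  have h1 := (hasDerivAt_maxpow n (x - c)).comp x ((hasDerivAt_id x).sub_const c)
  simpa [Function.comp_def] using h1

noncomputable def gDE (a r : ℝ) (j : ℕ) (t : ℝ) : ℝ :=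
  a ^ j * max (t - ((j : ℝ) - 1) * r) 0 ^ j / (Nat.factorial j)

noncomputable def GDE (a r : ℝ) (M : ℕ) (t : ℝ) : ℝ :=
  ∑ j ∈ Finset.range (M + 1), gDE a r j t

lemma gDE_cont (a r : ℝ) (j : ℕ) : Continuous (gDE a r j) := by
  unfold gDE; fun_prop

lemma GDE_cont (a r : ℝ) (M : ℕ) : Continuous (GDE a r M) := by
  unfold GDE; exact continuous_finset_sum _ fun j _ => gDE_cont a r j

lemma gDE_nonneg {a : ℝ} (ha : 0 ≤ a) (r : ℝ) (j : ℕ) (t : ℝ) : 0 ≤ gDE a r j t := by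
  unfold gDE
  positivity

lemma GDE_nonneg {a : ℝ} (ha : 0 ≤ a) (r : ℝ) (M : ℕ) (t : ℝ) : 0 ≤ GDE a r M t :=
  Finset.sum_nonneg fun j _ => gDE_nonneg ha r j t


lemma floorNat_le {r x : ℝ} (hr : 0 < r) {n : ℕ} (h : x ≤ n * r) : ⌊x / r⌋.toNat ≤ n := by
  have h1 : x / r ≤ (n : ℝ) := by
    rw [div_le_iff₀ hr]; linarith
  have h2 : ⌊x / r⌋ ≤ (n : ℤ) := by
    have := Int.floor_le_floor h1
    simpa using this
  exact Int.toNat_le.mpr h2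

lemma delayedExp_eq_GDE {r : ℝ} (hr : 0 < r) (a : ℝ) {t : ℝ} (ht : -r ≤ t) {M : ℕ}
    (hM : ⌊t / r⌋.toNat + 1 ≤ M) : delayedExp r a t = GDE a r M t := by
  unfold delayedExp GDE
  rcases lt_or_ge t 0 with ht0 | ht0
  · rw [if_neg (by linarith), if_pos ht0]
    rw [Finset.sum_eq_single 0]
    · simp [gDE]
    · intro j _ hj
      obtain ⟨k, rfl⟩ := Nat.exists_eq_succ_of_ne_zero hj
      have hc : t - ((k + 1 : ℕ) : ℝ) * r + r ≤ 0 := by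
        push_cast
        have : 0 ≤ (k : ℝ) * r := by positivity
        push_cast at this ⊢
        nlinarith
      unfold gDE
      rw [max_eq_right (by push_cast; push_cast at hc; nlinarith)]
      simp
    · intro h; simp at h
  · rw [if_neg (by linarith), if_neg (by linarith)]
    have hnn : (0 : ℤ) ≤ ⌊t / r⌋ := Int.floor_nonneg.mpr (by positivity)
    have hcast : ((⌊t / r⌋.toNat : ℕ) : ℝ) = ((⌊t / r⌋ : ℤ) : ℝ) := by
      exact_mod_cast Int.toNat_of_nonneg hnn
    have hfl : ((⌊t / r⌋.toNat : ℕ) : ℝ) ≤ t / r := by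
      rw [hcast]; exact Int.floor_le _
    have hstep : ∀ j ∈ Finset.range (⌊t / r⌋.toNat + 2),
        a ^ j * (t - ((j : ℝ) - 1) * r) ^ j / (Nat.factorial j) = gDE a r j t := by
      intro j hj
      have hj' : j ≤ ⌊t / r⌋.toNat + 1 := by simpa [Nat.lt_succ_iff] using Finset.mem_range.mp hj
      have hjr : ((j : ℝ) - 1) * r ≤ t := by
        have h1 : (j : ℝ) ≤ (⌊t / r⌋.toNat : ℝ) + 1 := by exact_mod_cast hj'
        have h2 : (j : ℝ) - 1 ≤ t / r := by linarith
        calc ((j : ℝ) - 1) * r ≤ (t / r) * r := by nlinarith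
          _ = t := by field_simp
      unfold gDE
      rw [max_eq_left (by linarith)]
    rw [Finset.sum_congr rfl hstep]
    apply Finset.sum_subset
    · apply Finset.range_subset_range.mpr; omega
    · intro j _ hj
      have hj2 : ⌊t / r⌋.toNat + 2 ≤ j := by simpa using Finset.mem_range.not.mp hj
      have hflt : t / r < (⌊t / r⌋.toNat : ℝ) + 1 := by
        rw [hcast]; exact Int.lt_floor_add_one _
      have hjr : t - ((j : ℝ) - 1) * r < 0 := by
        have h1 : ((⌊t / r⌋.toNat : ℝ)) + 1 ≤ (j : ℝ) - 1 := by
          have : (⌊t / r⌋.toNat + 2 : ℕ) ≤ j := hj2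
          have := Nat.cast_le (α := ℝ) |>.mpr this
          push_cast at this ⊢; linarith
        have h2 : t / r < (j : ℝ) - 1 := lt_of_lt_of_le hflt h1
        have h3 : t < ((j : ℝ) - 1) * r := by
          rw [div_lt_iff₀ hr] at h2; linarith
        linarith
      unfold gDE
      rw [max_eq_right (le_of_lt hjr)]
      have : j ≠ 0 := by omega
      rw [zero_pow this]
      simp

lemma integral_gDE {r : ℝ} (hr : 0 < r) (a : ℝ) {t : ℝ} (ht : 0 ≤ t) (j : ℕ) :
    ∫ u in (-r)..(t - r), gDE a r j u
      = a ^ j * max (t - (j : ℝ) * r) 0 ^ (j + 1) / (Nat.factorial (j + 1)) := by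
  rcases j with _ | k
  · have h1 : ∀ u : ℝ, gDE a r 0 u = 1 := by intro u; simp [gDE]
    rw [intervalIntegral.integral_congr (g := fun _ => (1:ℝ)) (fun u _ => h1 u)]
    rw [intervalIntegral.integral_const]
    rw [max_eq_left (by simpa using ht)]
    simp
  · set c : ℝ := (k : ℝ) * r with hc
    have hderiv : ∀ u : ℝ, HasDerivAt
        (fun y : ℝ => a ^ (k + 1) / (Nat.factorial (k + 2)) * max (y - c) 0 ^ (k + 2))
        (gDE a r (k + 1) u) u := by
      intro u
      have h1 := (hasDerivAt_maxpow' k c u).const_mul (a ^ (k + 1) / (Nat.factorial (k + 2)))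
      refine h1.congr_deriv ?_
      unfold gDE
      have hcc : ((k + 1 : ℕ) : ℝ) - 1 = (k : ℝ) := by push_cast; ring
      rw [hcc]
      have hfac : (Nat.factorial (k + 2) : ℝ) = ((k : ℝ) + 2) * (Nat.factorial (k + 1)) := by
        rw [Nat.factorial_succ]; push_cast; ring
      rw [hfac]
      have hfacpos : (0:ℝ) < (Nat.factorial (k + 1) : ℝ) := by positivity
      field_simp
      ring
    have hint : IntervalIntegrable (gDE a r (k + 1)) volume (-r) (t - r) :=
      (gDE_cont a r (k + 1)).intervalIntegrable _ _
    rw [intervalIntegral.integral_eq_sub_of_hasDerivAt (fun u _ => hderiv u) hint]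
    have hneg : max (-r - c) 0 = 0 := by
      apply max_eq_right
      have : 0 ≤ c := by positivity
      linarith
    rw [hneg, zero_pow (by omega)]
    have harg : t - r - c = t - ((k + 1 : ℕ) : ℝ) * r := by push_cast; ring
    rw [harg]
    field_simp
    ring

lemma GDE_identity {r : ℝ} (hr : 0 < r) {a : ℝ} (ha : 0 ≤ a) {t : ℝ} (ht : 0 ≤ t) (M : ℕ) :
    GDE a r (M + 1) t = 1 + a * ∫ u in (-r)..(t - r), GDE a r M u := by
  have hint : ∀ j ∈ Finset.range (M + 1), IntervalIntegrable (gDE a r j) volume (-r) (t - r) :=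
    fun j _ => (gDE_cont a r j).intervalIntegrable _ _
  unfold GDE
  rw [intervalIntegral.integral_finset_sum hint]
  rw [Finset.mul_sum]
  have hterm : ∀ j ∈ Finset.range (M + 1),
      a * ∫ u in (-r)..(t - r), gDE a r j u = gDE a r (j + 1) t := by
    intro j _
    rw [integral_gDE hr a ht j]
    unfold gDE
    have : ((j + 1 : ℕ) : ℝ) - 1 = (j : ℝ) := by push_cast; ring
    rw [this, pow_succ]
    ring
  rw [Finset.sum_congr rfl hterm]
  rw [Finset.sum_range_succ' (fun j => gDE a r j t) (M + 1)]
  have h0 : gDE a r 0 t = 1 := by simp [gDE]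
  rw [h0]
  ring

theorem stmt_6 (r k₁ k₂ : ℝ) (hr : 0 < r) (hk₁ : 0 ≤ k₁) (hk₂ : 0 ≤ k₂)
    (z₀ z : ℝ → ℝ)
    (hz₀ : ContDiff ℝ 1 z₀)
    (hcont : ContinuousOn z (Set.Ici (-r)))
    (hinit : ∀ s ∈ Set.Icc (-r) (0 : ℝ), z s = z₀ s)
    (hode : ∀ t > (0 : ℝ), HasDerivAt z (k₂ * z (t - r) - k₁ * z t) t) :
    ∀ t > (0 : ℝ), |z t| ≤
      (Real.exp (-k₁ * r) * |z₀ (-r)| +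
        ∫ s in (-r)..(0 : ℝ), Real.exp (k₁ * s) * |deriv z₀ s + k₁ * z₀ s|) *
      Real.exp (-k₁ * t) * delayedExp r (k₂ * Real.exp (k₁ * r)) t := by
  intro t ht
  set a := k₂ * Real.exp (k₁ * r) with ha_def
  have ha : 0 ≤ a := by positivity
  set C : ℝ := Real.exp (-k₁ * r) * |z₀ (-r)| +
      ∫ s in (-r)..(0:ℝ), Real.exp (k₁ * s) * |deriv z₀ s + k₁ * z₀ s| with hC_def
  set w : ℝ → ℝ := fun u => Real.exp (k₁ * u) * z u with hw_def
  have hwcont : ContinuousOn w (Set.Ici (-r)) :=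
    ((Real.continuous_exp.comp (continuous_const.mul continuous_id)).continuousOn).mul hcont
  have hz₀d : Differentiable ℝ z₀ := hz₀.differentiable one_ne_zero
  have hv : ∀ σ : ℝ, HasDerivAt (fun σ => Real.exp (k₁ * σ) * z₀ σ)
      (Real.exp (k₁ * σ) * (deriv z₀ σ + k₁ * z₀ σ)) σ := by
    intro σ
    have h1 : HasDerivAt (fun σ : ℝ => Real.exp (k₁ * σ)) (Real.exp (k₁ * σ) * k₁) σ := by
      simpa using ((hasDerivAt_id σ).const_mul k₁).exp
    have h2 : HasDerivAt z₀ (deriv z₀ σ) σ := (hz₀d σ).hasDerivAt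
    have h3 := h1.mul h2
    refine h3.congr_deriv ?_
    ring
  have hvint : Continuous fun σ => Real.exp (k₁ * σ) * (deriv z₀ σ + k₁ * z₀ σ) := by
    have := hz₀.continuous_deriv le_rfl
    fun_prop
  have habs : ∀ σ : ℝ, |Real.exp (k₁ * σ) * (deriv z₀ σ + k₁ * z₀ σ)|
      = Real.exp (k₁ * σ) * |deriv z₀ σ + k₁ * z₀ σ| := by
    intro σ
    rw [abs_mul, abs_of_pos (Real.exp_pos _)]
  have hCnonneg : 0 ≤ C := by
    rw [hC_def]
    apply add_nonneg (by positivity)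
    apply intervalIntegral.integral_nonneg (by linarith)
    intro s _
    positivity
  -- boundary bound
  have hbd : ∀ s ∈ Set.Icc (-r) (0:ℝ), |w s| ≤ C := by
    intro s hs
    have hftc : ∫ σ in (-r)..s, Real.exp (k₁ * σ) * (deriv z₀ σ + k₁ * z₀ σ)
        = Real.exp (k₁ * s) * z₀ s - Real.exp (k₁ * (-r)) * z₀ (-r) :=
      intervalIntegral.integral_eq_sub_of_hasDerivAt (fun σ _ => hv σ)
        (hvint.intervalIntegrable _ _)
    have hws : w s = Real.exp (k₁ * s) * z₀ s := by
      rw [hw_def]; simp only []; rw [hinit s hs]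
    rw [hws]
    have h1 : Real.exp (k₁ * s) * z₀ s
        = Real.exp (k₁ * (-r)) * z₀ (-r)
          + ∫ σ in (-r)..s, Real.exp (k₁ * σ) * (deriv z₀ σ + k₁ * z₀ σ) := by
      rw [hftc]; ring
    rw [h1]
    have h2 : |∫ σ in (-r)..s, Real.exp (k₁ * σ) * (deriv z₀ σ + k₁ * z₀ σ)|
        ≤ ∫ σ in (-r)..s, Real.exp (k₁ * σ) * |deriv z₀ σ + k₁ * z₀ σ| := by
      calc |∫ σ in (-r)..s, Real.exp (k₁ * σ) * (deriv z₀ σ + k₁ * z₀ σ)|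
          ≤ ∫ σ in (-r)..s, |Real.exp (k₁ * σ) * (deriv z₀ σ + k₁ * z₀ σ)| :=
            intervalIntegral.abs_integral_le_integral_abs hs.1
        _ = ∫ σ in (-r)..s, Real.exp (k₁ * σ) * |deriv z₀ σ + k₁ * z₀ σ| := by
            exact intervalIntegral.integral_congr fun σ _ => habs σ
    have h3 : ∫ σ in (-r)..s, Real.exp (k₁ * σ) * |deriv z₀ σ + k₁ * z₀ σ|
        ≤ ∫ σ in (-r)..(0:ℝ), Real.exp (k₁ * σ) * |deriv z₀ σ + k₁ * z₀ σ| := by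
      apply intervalIntegral.integral_mono_interval le_rfl hs.1 hs.2
      · filter_upwards with σ
        positivity
      · apply Continuous.intervalIntegrable
        have := hz₀.continuous_deriv le_rfl
        fun_prop
    have h4 : |Real.exp (k₁ * (-r)) * z₀ (-r)| = Real.exp (-k₁ * r) * |z₀ (-r)| := by
      rw [abs_mul, abs_of_pos (Real.exp_pos _)]
      ring_nf
    calc |Real.exp (k₁ * (-r)) * z₀ (-r)
          + ∫ σ in (-r)..s, Real.exp (k₁ * σ) * (deriv z₀ σ + k₁ * z₀ σ)|
        ≤ |Real.exp (k₁ * (-r)) * z₀ (-r)|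
          + |∫ σ in (-r)..s, Real.exp (k₁ * σ) * (deriv z₀ σ + k₁ * z₀ σ)| := abs_add_le _ _
      _ ≤ Real.exp (-k₁ * r) * |z₀ (-r)|
          + ∫ σ in (-r)..(0:ℝ), Real.exp (k₁ * σ) * |deriv z₀ σ + k₁ * z₀ σ| := by
          rw [h4]; exact add_le_add le_rfl (le_trans h2 h3)
      _ = C := hC_def.symm
  -- delayedExp = 1 on [-r, 0]
  have hEone : ∀ u ∈ Set.Icc (-r) (0:ℝ), delayedExp r a u = 1 := by
    intro u hu
    rcases lt_or_eq_of_le hu.2 with h | h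
    · unfold delayedExp
      rw [if_neg (not_lt.mpr hu.1), if_pos h]
    · subst h
      rw [delayedExp_eq_GDE hr a hu.1 (M := 1) (by norm_num)]
      simp [GDE, gDE, Finset.sum_range_succ]
  -- main induction
  have hkey : ∀ n : ℕ, ∀ u, -r ≤ u → u ≤ (n : ℝ) * r → |w u| ≤ C * delayedExp r a u := by
    intro n
    induction n with
    | zero =>
      intro u h1 h2
      have h2' : u ≤ 0 := by simpa using h2
      rw [hEone u ⟨h1, h2'⟩, mul_one]
      exact hbd u ⟨h1, h2'⟩
    | succ n ih =>
      intro u h1 h2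
      rcases le_or_gt u 0 with hu0 | hu0
      · rw [hEone u ⟨h1, hu0⟩, mul_one]
        exact hbd u ⟨h1, hu0⟩
      · -- 0 < u ≤ (n+1) r
        have h2' : u ≤ ((n : ℝ) + 1) * r := by push_cast at h2; linarith
        have hwc : ContinuousOn w (Set.Icc 0 u) :=
          hwcont.mono fun x hx => le_trans (by linarith) hx.1
        have hfc : ContinuousOn (fun s => a * w (s - r)) (Set.Icc 0 u) := by
          apply ContinuousOn.mul continuousOn_const
          apply hwcont.comp (Continuous.continuousOn (by fun_prop))
          intro x hx
          simp only [Set.mem_Ici]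
          linarith [hx.1]
        have hderivw : ∀ x ∈ Set.Ioo (0:ℝ) u, HasDerivAt w (a * w (x - r)) x := by
          intro x hx
          have hz := hode x hx.1
          have he : HasDerivAt (fun σ : ℝ => Real.exp (k₁ * σ)) (Real.exp (k₁ * x) * k₁) x := by
            simpa using ((hasDerivAt_id x).const_mul k₁).exp
          have h3 := he.mul hz
          have h4 : a * w (x - r)
              = Real.exp (k₁ * x) * k₁ * z x
                + Real.exp (k₁ * x) * (k₂ * z (x - r) - k₁ * z x) := by
            rw [hw_def, ha_def]
            simp only []
            rw [show k₂ * Real.exp (k₁ * r) * (Real.exp (k₁ * (x - r)) * z (x - r))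
                = k₂ * (Real.exp (k₁ * r) * Real.exp (k₁ * (x - r))) * z (x - r) from by ring]
            rw [← Real.exp_add, show k₁ * r + k₁ * (x - r) = k₁ * x from by ring]
            ring
          rw [h4]
          exact h3
        have hFTC : ∫ s in (0:ℝ)..u, a * w (s - r) = w u - w 0 :=
          intervalIntegral.integral_eq_sub_of_hasDeriv_right_of_le hu0.le hwc
            (fun x hx => (hderivw x hx).hasDerivWithinAt)
            (hfc.intervalIntegrable_of_Icc hu0.le)
        have hw0 : |w 0| ≤ C := hbd 0 ⟨by linarith, le_refl 0⟩
        have hb2 : ∀ s ∈ Set.Icc (0:ℝ) u, |a * w (s - r)| ≤ a * (C * GDE a r (n + 1) (s - r)) := by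
          intro s hs
          have hs1 : -r ≤ s - r := by linarith [hs.1]
          have hs2 : s - r ≤ (n : ℝ) * r := by linarith [hs.2]
          have h3 := ih (s - r) hs1 hs2
          have hfloor : ⌊(s - r) / r⌋.toNat + 1 ≤ n + 1 := by
            have := floorNat_le hr (x := s - r) (n := n) (by push_cast; linarith)
            omega
          rw [delayedExp_eq_GDE hr a hs1 hfloor] at h3
          rw [abs_mul, abs_of_nonneg ha]
          exact mul_le_mul_of_nonneg_left h3 ha
        have hGc : Continuous fun s : ℝ => a * (C * GDE a r (n + 1) (s - r)) := by
          have := GDE_cont a r (n + 1)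
          fun_prop
        have hintmono : ∫ s in (0:ℝ)..u, |a * w (s - r)|
            ≤ ∫ s in (0:ℝ)..u, a * (C * GDE a r (n + 1) (s - r)) := by
          apply intervalIntegral.integral_mono_on hu0.le
          · exact (hfc.abs).intervalIntegrable_of_Icc hu0.le
          · exact hGc.intervalIntegrable _ _
          · exact hb2
        have hsub : ∫ s in (0:ℝ)..u, a * (C * GDE a r (n + 1) (s - r))
            = a * C * ∫ v in (-r)..(u - r), GDE a r (n + 1) v := by
          rw [show (fun s : ℝ => a * (C * GDE a r (n + 1) (s - r)))
              = fun s : ℝ => (a * C) * GDE a r (n + 1) (s - r) from by funext s; ring]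
          rw [intervalIntegral.integral_const_mul]
          rw [intervalIntegral.integral_comp_sub_right (GDE a r (n + 1)) r]
          norm_num
        have habs2 : |∫ s in (0:ℝ)..u, a * w (s - r)|
            ≤ ∫ s in (0:ℝ)..u, |a * w (s - r)| :=
          intervalIntegral.abs_integral_le_integral_abs hu0.le
        have hid := GDE_identity hr ha hu0.le (n + 1)
        have hfloor2 : ⌊u / r⌋.toNat + 1 ≤ n + 1 + 1 := by
          have := floorNat_le hr (x := u) (n := n + 1) (by push_cast; linarith)
          omega
        rw [delayedExp_eq_GDE hr a h1 hfloor2]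
        calc |w u| = |w 0 + ∫ s in (0:ℝ)..u, a * w (s - r)| := by rw [hFTC]; ring_nf
          _ ≤ |w 0| + |∫ s in (0:ℝ)..u, a * w (s - r)| := abs_add_le _ _
          _ ≤ C + (a * C * ∫ v in (-r)..(u - r), GDE a r (n + 1) v) := by
              apply add_le_add hw0
              calc |∫ s in (0:ℝ)..u, a * w (s - r)|
                  ≤ ∫ s in (0:ℝ)..u, |a * w (s - r)| := habs2
                _ ≤ ∫ s in (0:ℝ)..u, a * (C * GDE a r (n + 1) (s - r)) := hintmono
                _ = a * C * ∫ v in (-r)..(u - r), GDE a r (n + 1) v := hsub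
          _ ≤ C * GDE a r (n + 1 + 1) u := by
              rw [hid]
              have hInonneg : 0 ≤ ∫ v in (-r)..(u - r), GDE a r (n + 1) v := by
                apply intervalIntegral.integral_nonneg (by linarith)
                intro v _
                exact GDE_nonneg ha r (n + 1) v
              nlinarith
  -- conclude
  have hn : t ≤ ((⌈t / r⌉.toNat : ℕ) : ℝ) * r := by
    have hpos : (0:ℤ) ≤ ⌈t / r⌉ := Int.ceil_nonneg (by positivity)
    have hcast : ((⌈t / r⌉.toNat : ℕ) : ℝ) = ((⌈t / r⌉ : ℤ) : ℝ) := by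
      exact_mod_cast Int.toNat_of_nonneg hpos
    have hle : t / r ≤ ((⌈t / r⌉ : ℤ) : ℝ) := Int.le_ceil _
    rw [hcast]
    calc t = (t / r) * r := by field_simp
      _ ≤ ((⌈t / r⌉ : ℤ) : ℝ) * r := by nlinarith
  have hmain := hkey (⌈t / r⌉.toNat) t (by linarith) hn
  have hwt : |w t| = Real.exp (k₁ * t) * |z t| := by
    rw [hw_def]
    simp only []
    rw [abs_mul, abs_of_pos (Real.exp_pos _)]
  rw [hwt] at hmain
  have hfin := mul_le_mul_of_nonneg_left hmain (le_of_lt (Real.exp_pos (-(k₁ * t))))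
  rw [show Real.exp (-(k₁ * t)) * (Real.exp (k₁ * t) * |z t|)
      = (Real.exp (-(k₁ * t)) * Real.exp (k₁ * t)) * |z t| from by ring,
    ← Real.exp_add, neg_add_cancel, Real.exp_zero, one_mul] at hfin
  calc |z t| ≤ Real.exp (-(k₁ * t)) * (C * delayedExp r a t) := hfin
    _ = C * Real.exp (-k₁ * t) * delayedExp r a t := by rw [neg_mul]; ring
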